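/- For any finite simple graph G of order n, γ_P(G) ≤ ⌊n / γ_P(Ḡ)⌋, where Ḡ is the complement of G. -/

import Mathlib

/-- The set of observed vertices in the power domination process started from `S`:
initially `N[S]` (the closed neighborhood of `S`), and while some observed vertex `v`
has exactly one unobserved neighbor `w`, `w` becomes observed. -/
inductive SimpleGraph.Observed {V : Type*} (G : SimpleGraph V) (S : Set V) : V → Prop
  | mem : ∀ v ∈ S, SimpleGraph.Observed G S v
  | dominate : ∀ v ∈ S, ∀ w, G.Adj v w → SimpleGraph.Observed G S w
  | force : ∀ v w, SimpleGraph.Observed G S v → G.Adj v w →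
      (∀ u, G.Adj v u → u ≠ w → SimpleGraph.Observed G S u) → SimpleGraph.Observed G S w

/-- `S` is a power dominating set of `G` if every vertex becomes observed. -/
def SimpleGraph.IsPowerDominating {V : Type*} (G : SimpleGraph V) (S : Set V) : Prop :=
  ∀ v, G.Observed S v

/-- The power domination number: minimum cardinality of a power dominating set. -/
noncomputable def SimpleGraph.powerDomNum {V : Type*} (G : SimpleGraph V) : ℕ :=
  sInf {k | ∃ S : Finset V, S.card = k ∧ G.IsPowerDominating ↑S}

/-- `S` is a dominating set of `G` if `N[S] = V`. -/
def SimpleGraph.IsDominating {V : Type*} (G : SimpleGraph V) (S : Set V) : Prop :=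
  ∀ v, v ∈ S ∨ ∃ u ∈ S, G.Adj u v

/-- The domination number: minimum cardinality of a dominating set. -/
noncomputable def SimpleGraph.domNum {V : Type*} (G : SimpleGraph V) : ℕ :=
  sInf {k | ∃ S : Finset V, S.card = k ∧ G.IsDominating ↑S}

/-- The minimum degree `δ(G)`. -/
noncomputable def SimpleGraph.minDeg {V : Type*} (G : SimpleGraph V) : ℕ :=
  sInf (Set.range fun v => (G.neighborSet v).ncard)

/-- The vertex connectivity `κ(G)`: the minimum cardinality of a set `S` of vertices
such that removing `S` disconnects `G` (leaves a non-preconnected graph) or leaves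
at most one vertex.  In particular `κ(Kₙ) = n - 1` and `κ(G) = 0` for disconnected `G`. -/
noncomputable def SimpleGraph.vertexConn {V : Type*} (G : SimpleGraph V) [Fintype V] : ℕ :=
  sInf {k | ∃ S : Finset V, S.card = k ∧
    (¬ (G.induce ((↑S : Set V)ᶜ)).Preconnected ∨ Fintype.card V ≤ S.card + 1)}

/-- The edge connectivity `λ(G)`: the minimum cardinality of a set of edges of `G`
whose removal disconnects `G`. -/
noncomputable def SimpleGraph.edgeConn {V : Type*} (G : SimpleGraph V) : ℕ :=
  sInf {k | ∃ F : Finset (Sym2 V), ↑F ⊆ G.edgeSet ∧ F.card = k ∧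
    ¬ (G.deleteEdges ↑F).Preconnected}

/-- `G` is super-λ: `G` is maximally connected (`κ(G) = λ(G) = δ(G)`) and every
minimum edge-cut is trivial, i.e. consists of all edges incident with a single vertex. -/
def SimpleGraph.IsSuperLambda {V : Type*} (G : SimpleGraph V) [Fintype V] : Prop :=
  G.vertexConn = G.edgeConn ∧ G.edgeConn = G.minDeg ∧
  ∀ F : Finset (Sym2 V), ↑F ⊆ G.edgeSet → ¬ (G.deleteEdges ↑F).Preconnected →
    F.card = G.edgeConn → ∃ v : V, (↑F : Set (Sym2 V)) = {e ∈ G.edgeSet | v ∈ e}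

section JPAux

open Finset

variable {V : Type*} [Fintype V]

private lemma univ_isDominating (G : SimpleGraph V) :
    G.IsDominating ↑(Finset.univ : Finset V) := fun v => Or.inl (by simp)

private lemma isDominating_isPowerDominating (G : SimpleGraph V) (S : Set V)
    (h : G.IsDominating S) : G.IsPowerDominating S := by
  intro v
  rcases h v with hv | ⟨u, hu, huv⟩
  · exact SimpleGraph.Observed.mem v hv
  · exact SimpleGraph.Observed.dominate u hu v huv

private lemma powerDomNum_le_of_dominating (G : SimpleGraph V) (D : Finset V)
    (h : G.IsDominating ↑D) : G.powerDomNum ≤ D.card :=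
  Nat.sInf_le ⟨D, rfl, isDominating_isPowerDominating G _ h⟩

private lemma pdSet_nonempty (G : SimpleGraph V) :
    {k | ∃ S : Finset V, S.card = k ∧ G.IsPowerDominating ↑S}.Nonempty :=
  ⟨_, Finset.univ, rfl, isDominating_isPowerDominating G _ (univ_isDominating G)⟩

private lemma domSet_nonempty (G : SimpleGraph V) :
    {k | ∃ S : Finset V, S.card = k ∧ G.IsDominating ↑S}.Nonempty :=
  ⟨_, Finset.univ, rfl, univ_isDominating G⟩

private lemma not_observed_empty (G : SimpleGraph V) (v : V) :
    ¬ G.Observed (∅ : Set V) v := by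
  intro h
  induction h with
  | mem v hv => exact hv
  | dominate v hv w _ => exact hv
  | force v w hv hadj hall ihv ihall => exact ihv

private lemma powerDomNum_pos [Nonempty V] (G : SimpleGraph V) : 0 < G.powerDomNum := by
  rw [Nat.pos_iff_ne_zero]
  intro h0
  obtain ⟨S, hScard, hSpd⟩ := Nat.sInf_mem (pdSet_nonempty G)
  rw [show sInf {k | ∃ S : Finset V, S.card = k ∧ G.IsPowerDominating ↑S} = G.powerDomNum
    from rfl, h0] at hScard
  rw [Finset.card_eq_zero] at hScard
  subst hScard
  obtain ⟨v⟩ := (inferInstance : Nonempty V)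
  exact not_observed_empty G v (by simpa using hSpd v)

private lemma domNum_pos [Nonempty V] (G : SimpleGraph V) : 0 < G.domNum := by
  rw [Nat.pos_iff_ne_zero]
  intro h0
  obtain ⟨S, hScard, hSdom⟩ := Nat.sInf_mem (domSet_nonempty G)
  rw [show sInf {k | ∃ S : Finset V, S.card = k ∧ G.IsDominating ↑S} = G.domNum
    from rfl, h0] at hScard
  rw [Finset.card_eq_zero] at hScard
  subst hScard
  obtain ⟨v⟩ := (inferInstance : Nonempty V)
  rcases hSdom v with hv | ⟨u, hu, _⟩
  · simp at hv
  · simp at hu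

private lemma exists_domNum_set (G : SimpleGraph V) :
    ∃ B : Finset V, B.card = G.domNum ∧ G.IsDominating ↑B := by
  obtain ⟨B, hBcard, hBdom⟩ := Nat.sInf_mem (domSet_nonempty G)
  exact ⟨B, hBcard, hBdom⟩

/-- The Jaeger–Payan theorem: there is a dominating set of `G` of size at most
`n / γ(Ḡ)`. -/
private lemma jaeger_payan [Nonempty V] (G : SimpleGraph V) :
    ∃ D : Finset V, G.IsDominating ↑D ∧ D.card * Gᶜ.domNum ≤ Fintype.card V := by
  classical
  set n := Fintype.card V with hn
  set b := Gᶜ.domNum with hb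
  have hbpos : 0 < b := domNum_pos Gᶜ
  -- the image of any "cover function" dominates Gᶜ, hence has size ≥ b
  have himagedom : ∀ f : V → V, (∀ v, v = f v ∨ Gᶜ.Adj (f v) v) →
      b ≤ (Finset.univ.image f).card := by
    intro f hf
    apply Nat.sInf_le
    refine ⟨Finset.univ.image f, rfl, ?_⟩
    intro v
    rcases hf v with h | h
    · exact Or.inl (by exact_mod_cast Finset.mem_image.mpr ⟨v, Finset.mem_univ v, h.symm⟩)
    · exact Or.inr ⟨f v, by exact_mod_cast Finset.mem_image.mpr ⟨v, Finset.mem_univ v, rfl⟩, h⟩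
  -- Valid configurations
  set Valid : (V → V) → Prop := fun f =>
    (∀ v, v = f v ∨ Gᶜ.Adj (f v) v) ∧ (Finset.univ.image f).card ≤ b with hValid
  -- potentials
  set Phi : (V → V) → ℕ := fun f => ∑ w, (univ.filter fun z => f z = f w).card with hPhi
  set Eng : (V → V) → ℕ := fun f =>
    ∑ w, (univ.filter fun z => f z = f w ∧ Gᶜ.Adj w z).card with hEng
  set C : ℕ := n * n + 1 with hC
  set Om : (V → V) → ℕ := fun f => 3 * Phi f + 2 * (C - Eng f) with hOm
  have hEle : ∀ f : V → V, Eng f ≤ n * n := by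
    intro f
    rw [hEng]
    calc ∑ w, (univ.filter fun z => f z = f w ∧ Gᶜ.Adj w z).card
        ≤ ∑ _w : V, n := by
          apply Finset.sum_le_sum
          intro w _
          exact le_trans (Finset.card_filter_le _ _) (le_of_eq (Finset.card_univ))
      _ = n * n := by simp [Finset.sum_const, mul_comm]; exact Or.inl hn.symm
  -- a valid configuration exists
  have hex : ∃ f : V → V, Valid f := by
    obtain ⟨B, hBcard, hBdom⟩ := exists_domNum_set Gᶜ
    have hch : ∀ v : V, ∃ x, x ∈ B ∧ (v = x ∨ Gᶜ.Adj x v) := by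
      intro v
      rcases hBdom v with hv | ⟨u, hu, hadj⟩
      · exact ⟨v, by exact_mod_cast hv, Or.inl rfl⟩
      · exact ⟨u, by exact_mod_cast hu, Or.inr hadj⟩
    choose f hfB hfd using hch
    refine ⟨f, hfd, ?_⟩
    calc (Finset.univ.image f).card ≤ B.card := Finset.card_le_card (by
          intro x hx
          obtain ⟨w, _, rfl⟩ := Finset.mem_image.mp hx
          exact hfB w)
      _ = b := hBcard
  -- pick a minimal configuration
  set Conf : Finset (V → V) := Finset.univ.filter Valid with hConf
  have hConfne : Conf.Nonempty := by
    obtain ⟨f, hf⟩ := hex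
    exact ⟨f, Finset.mem_filter.mpr ⟨Finset.mem_univ f, hf⟩⟩
  obtain ⟨f, hfC, hfmin⟩ := Conf.exists_min_image Om hConfne
  have hfV : Valid f := (Finset.mem_filter.mp hfC).2
  obtain ⟨hfcov, hfcard⟩ := hfV
  -- minimal fiber
  set img : Finset V := Finset.univ.image f with himg
  have himgne : img.Nonempty := by
    obtain ⟨v⟩ := (inferInstance : Nonempty V)
    exact ⟨f v, Finset.mem_image.mpr ⟨v, Finset.mem_univ v, rfl⟩⟩
  obtain ⟨xm, hxm, hxmmin⟩ :=
    img.exists_min_image (fun x => (univ.filter fun w => f w = x).card) himgne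
  set A : Finset V := univ.filter fun w => f w = xm with hA
  set s : ℕ := A.card with hs
  -- size bound
  have hbimg : b ≤ img.card := himagedom f hfcov
  have hsb : s * b ≤ n := by
    have hfib : (univ : Finset V).card = ∑ x ∈ img, (univ.filter fun w => f w = x).card :=
      Finset.card_eq_sum_card_fiberwise (fun v _ => Finset.mem_image_of_mem f (mem_univ v))
    have h1 : img.card * s ≤ ∑ x ∈ img, (univ.filter fun w => f w = x).card := by
      have := Finset.card_nsmul_le_sum img
        (fun x => (univ.filter fun w => f w = x).card) s (fun x hx => hxmmin x hx)
      simpa [smul_eq_mul] using this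
    calc s * b ≤ s * img.card := Nat.mul_le_mul_left s hbimg
      _ = img.card * s := mul_comm _ _
      _ ≤ ∑ x ∈ img, (univ.filter fun w => f w = x).card := h1
      _ = (univ : Finset V).card := hfib.symm
      _ = n := by rw [Finset.card_univ]
  -- the minimal fiber dominates G
  have hAdom : G.IsDominating ↑A := by
    by_contra hnot
    rw [SimpleGraph.IsDominating] at hnot
    push_neg at hnot
    obtain ⟨v, hvA, hvadj⟩ := hnot
    have hvA' : v ∉ A := fun h => hvA (by exact_mod_cast h)
    have hwit : ∀ w ∈ A, Gᶜ.Adj v w := by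
      intro w hw
      rw [SimpleGraph.compl_adj]
      refine ⟨?_, ?_⟩
      · rintro rfl; exact hvA' hw
      · intro h; exact hvadj w (by exact_mod_cast hw) h.symm
    set j : V := f v with hj
    set Q : Finset V := univ.filter fun w => f w = j with hQ
    have hvQ : v ∈ Q := by simp [hQ]; exact hj.symm
    have hjimg : j ∈ img := Finset.mem_image_of_mem f (mem_univ v)
    have hjxm : j ≠ xm := by
      intro h
      exact hvA' (by simp [hA, ← hj, h])
    set r : ℕ := Q.card with hr
    have hsr : s ≤ r := hxmmin j hjimg
    have hximg2 : 2 ≤ img.card := by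
      have : ({j, xm} : Finset V) ⊆ img := by
        intro y hy
        rcases Finset.mem_insert.mp hy with rfl | hy
        · exact hjimg
        · rwa [Finset.mem_singleton.mp hy]
      calc 2 = ({j, xm} : Finset V).card := by
            rw [Finset.card_insert_of_notMem (by simp [hjxm]), Finset.card_singleton]
        _ ≤ img.card := Finset.card_le_card this
    -- FACT 2 : v has a G-neighbor in its own fiber
    have hfact2 : ∃ w ∈ Q, w ≠ v ∧ G.Adj v w := by
      by_contra hno
      push_neg at hno
      set g : V → V := fun w => if f w = xm ∨ f w = j then v else f w with hg
      have hgeq : ∀ w, (f w = xm ∨ f w = j) → g w = v := by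
        intro w hc; simp only [hg]; rw [if_pos hc]
      have hgne : ∀ w, ¬(f w = xm ∨ f w = j) → g w = f w := by
        intro w hc; simp only [hg]; rw [if_neg hc]
      have hgcov : ∀ w, w = g w ∨ Gᶜ.Adj (g w) w := by
        intro w
        by_cases hc : f w = xm ∨ f w = j
        · rw [hgeq w hc]
          rcases hc with hc | hc
          · exact Or.inr (hwit w (by simp [hA, hc]))
          · by_cases hwv : w = v
            · exact Or.inl hwv
            · refine Or.inr ?_
              rw [SimpleGraph.compl_adj]
              exact ⟨fun h => hwv h.symm, hno w (by simp [hQ, hc]) hwv⟩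
        · rw [hgne w hc]
          exact hfcov w
      have hble : b ≤ (Finset.univ.image g).card := himagedom g hgcov
      have hsub : Finset.univ.image g ⊆ insert v ((img.erase xm).erase j) := by
        intro x hx
        obtain ⟨w, _, rfl⟩ := Finset.mem_image.mp hx
        by_cases hc : f w = xm ∨ f w = j
        · rw [hgeq w hc]; exact Finset.mem_insert_self _ _
        · rw [hgne w hc]
          push_neg at hc
          exact Finset.mem_insert_of_mem (Finset.mem_erase.mpr ⟨hc.2,
            Finset.mem_erase.mpr ⟨hc.1, Finset.mem_image_of_mem f (mem_univ w)⟩⟩)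
      have hcarderase : ((img.erase xm).erase j).card + 2 = img.card := by
        rw [Finset.card_erase_of_mem (Finset.mem_erase.mpr ⟨hjxm, hjimg⟩),
          Finset.card_erase_of_mem hxm]
        omega
      have : b ≤ b - 1 := by
        calc b ≤ (Finset.univ.image g).card := hble
          _ ≤ (insert v ((img.erase xm).erase j)).card := Finset.card_le_card hsub
          _ ≤ ((img.erase xm).erase j).card + 1 := Finset.card_insert_le _ _
          _ ≤ b - 1 := by omega
      omega
    obtain ⟨w0, hw0Q, hw0v, hw0adj⟩ := hfact2
    -- the improving move
    set f' : V → V := fun w => if f w = xm ∨ w = v then v else f w with hf'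
    have hf'eq : ∀ w, (f w = xm ∨ w = v) → f' w = v := by
      intro w hc; simp only [hf']; rw [if_pos hc]
    have hf'ne : ∀ w, ¬(f w = xm ∨ w = v) → f' w = f w := by
      intro w hc; simp only [hf']; rw [if_neg hc]
    have hf'cov : ∀ w, w = f' w ∨ Gᶜ.Adj (f' w) w := by
      intro w
      by_cases hc : f w = xm ∨ w = v
      · rw [hf'eq w hc]
        rcases hc with hc | hc
        · exact Or.inr (hwit w (by simp [hA, hc]))
        · exact Or.inl hc
      · rw [hf'ne w hc]
        exact hfcov w
    have hf'sub : Finset.univ.image f' ⊆ insert v (img.erase xm) := by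
      intro x hx
      obtain ⟨w, _, rfl⟩ := Finset.mem_image.mp hx
      by_cases hc : f w = xm ∨ w = v
      · rw [hf'eq w hc]; exact Finset.mem_insert_self _ _
      · rw [hf'ne w hc]
        push_neg at hc
        exact Finset.mem_insert_of_mem (Finset.mem_erase.mpr ⟨hc.1,
          Finset.mem_image_of_mem f (mem_univ w)⟩)
    -- case: v is a center different from xm — direct contradiction
    by_cases hvimg : v ∈ img ∧ v ≠ xm
    · have hsub2 : Finset.univ.image f' ⊆ img.erase xm := by
        refine hf'sub.trans ?_
        rw [Finset.insert_subset_iff]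
        exact ⟨Finset.mem_erase.mpr ⟨hvimg.2, hvimg.1⟩, Finset.Subset.refl _⟩
      have : b ≤ img.card - 1 := by
        calc b ≤ (Finset.univ.image f').card := himagedom f' hf'cov
          _ ≤ (img.erase xm).card := Finset.card_le_card hsub2
          _ = img.card - 1 := Finset.card_erase_of_mem hxm
      omega
    · -- clean case
      have Hc : ∀ w, f w = v → f w = xm := by
        intro w hw
        by_cases hne : v = xm
        · rw [hw, hne]
        · exact absurd ⟨Finset.mem_image.mpr ⟨w, mem_univ w, hw⟩, hne⟩ hvimg
      have hvnj : v ≠ j := by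
        intro h
        have hfv : f v = v := by rw [← hj, ← h]
        exact hjxm (hj.trans (Hc v hfv))
      -- fiber computations
      have F1 : (univ.filter fun z => f' z = v) = insert v A := by
        ext z
        simp only [Finset.mem_filter, mem_univ, true_and, Finset.mem_insert]
        constructor
        · intro hz
          by_cases hc : f z = xm ∨ z = v
          · rcases hc with hc | hc
            · exact Or.inr (by simp [hA, hc])
            · exact Or.inl hc
          · rw [hf'ne z hc] at hz
            push_neg at hc
            exact absurd (Hc z hz) hc.1
        · intro hz
          rcases hz with rfl | hz
          · exact hf'eq z (Or.inr rfl)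
          · simp only [hA, Finset.mem_filter, mem_univ, true_and] at hz
            exact hf'eq z (Or.inl hz)
      have F2 : (univ.filter fun z => f' z = j) = Q.erase v := by
        ext z
        simp only [Finset.mem_filter, mem_univ, true_and, Finset.mem_erase]
        constructor
        · intro hz
          by_cases hc : f z = xm ∨ z = v
          · rw [hf'eq z hc] at hz
            exact absurd hz hvnj
          · rw [hf'ne z hc] at hz
            push_neg at hc
            exact ⟨hc.2, by simp [hQ, hz]⟩
        · rintro ⟨hzv, hzQ⟩
          simp only [hQ, Finset.mem_filter, mem_univ, true_and] at hzQ
          have hzxm : f z ≠ xm := by rw [hzQ]; exact hjxm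
          rw [hf'ne z (by push_neg; exact ⟨hzxm, hzv⟩)]
          exact hzQ
      have hpoint : ∀ y, y ≠ v → y ≠ j → y ≠ xm → ∀ z, (f' z = y ↔ f z = y) := by
        intro y hyv hyj hyxm z
        by_cases hc : f z = xm ∨ z = v
        · rw [hf'eq z hc]
          constructor
          · intro h; exact absurd h.symm hyv
          · intro h
            rcases hc with hc | hc
            · rw [h] at hc; exact absurd hc hyxm
            · rw [hc] at h; rw [← hj] at h; exact absurd h.symm hyj
        · rw [hf'ne z hc]
      -- basic disjointness and splitting facts
      have hAQdisj : Disjoint A Q := by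
        rw [Finset.disjoint_left]
        intro a ha haQ
        simp only [hA, Finset.mem_filter, mem_univ, true_and] at ha
        simp only [hQ, Finset.mem_filter, mem_univ, true_and] at haQ
        exact hjxm (haQ.symm.trans ha)
      have hU : insert v A ∪ Q.erase v = A ∪ Q := by
        ext z
        simp only [Finset.mem_union, Finset.mem_insert, Finset.mem_erase]
        constructor
        · rintro ((rfl | hz) | ⟨_, hz⟩)
          · exact Or.inr hvQ
          · exact Or.inl hz
          · exact Or.inr hz
        · rintro (hz | hz)
          · exact Or.inl (Or.inr hz)
          · by_cases hzv : z = v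
            · exact Or.inl (Or.inl hzv)
            · exact Or.inr ⟨hzv, hz⟩
      have hdisj' : Disjoint (insert v A) (Q.erase v) := by
        rw [Finset.disjoint_left]
        intro a ha haQ
        rcases Finset.mem_insert.mp ha with rfl | ha
        · exact (Finset.mem_erase.mp haQ).1 rfl
        · exact (Finset.disjoint_left.mp hAQdisj) ha (Finset.mem_of_mem_erase haQ)
      have hsplit : ∀ t : V → ℕ, ∑ w, t w
          = (∑ w ∈ A, t w + ∑ w ∈ Q, t w) + ∑ w ∈ univ \ (A ∪ Q), t w := by
        intro t
        rw [← Finset.sum_sdiff (Finset.subset_univ (A ∪ Q)), Finset.sum_union hAQdisj]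
        ring
      have hsplit' : ∀ t : V → ℕ, ∑ w, t w
          = (∑ w ∈ insert v A, t w + ∑ w ∈ Q.erase v, t w) + ∑ w ∈ univ \ (A ∪ Q), t w := by
        intro t
        rw [← Finset.sum_sdiff (Finset.subset_univ (A ∪ Q)), ← hU, Finset.sum_union hdisj']
        ring
      set r1 : ℕ := (Q.erase v).card with hr1e
      have hr1 : r1 + 1 = r := Finset.card_erase_add_one hvQ
      -- Phi values
      have tA : ∀ w ∈ A, (univ.filter fun z => f z = f w).card = s := by
        intro w hw
        have hfw : f w = xm := by simpa [hA] using hw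
        have : (univ.filter fun z => f z = f w) = A := by
          rw [hA]
          exact Finset.filter_congr (fun z _ => by rw [hfw])
        rw [this, ← hs]
      have tQ : ∀ w ∈ Q, (univ.filter fun z => f z = f w).card = r := by
        intro w hw
        have hfw : f w = j := by simpa [hQ] using hw
        have : (univ.filter fun z => f z = f w) = Q := by
          rw [hQ]
          exact Finset.filter_congr (fun z _ => by rw [hfw])
        rw [this, ← hr]
      have tA' : ∀ w ∈ insert v A, (univ.filter fun z => f' z = f' w).card = s + 1 := by
        intro w hw
        have hfw : f' w = v := by
          rcases Finset.mem_insert.mp hw with rfl | hw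
          · exact hf'eq w (Or.inr rfl)
          · exact hf'eq w (Or.inl (by simpa [hA] using hw))
        rw [hfw, F1, Finset.card_insert_of_notMem hvA', ← hs]
      have tQ' : ∀ w ∈ Q.erase v, (univ.filter fun z => f' z = f' w).card = r1 := by
        intro w hw
        obtain ⟨hwv, hwQ⟩ := Finset.mem_erase.mp hw
        have hfw : f w = j := by simpa [hQ] using hwQ
        have hf'w : f' w = j := by
          rw [hf'ne w (by push_neg; exact ⟨by rw [hfw]; exact hjxm, hwv⟩)]
          exact hfw
        rw [hf'w, F2, ← hr1e]
      have trest : ∀ w ∈ univ \ (A ∪ Q),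
          (univ.filter fun z => f' z = f' w).card = (univ.filter fun z => f z = f w).card := by
        intro w hw
        simp only [Finset.mem_sdiff, Finset.mem_union, mem_univ, true_and] at hw
        have hwA : w ∉ A := fun h => hw (Or.inl h)
        have hwQ : w ∉ Q := fun h => hw (Or.inr h)
        have h1 : f w ≠ xm := by intro h; exact hwA (by simp [hA, h])
        have h2 : f w ≠ j := by intro h; exact hwQ (by simp [hQ, h])
        have h3 : w ≠ v := by rintro rfl; exact hwQ hvQ
        have h4 : f w ≠ v := fun h => h1 (Hc w h)
        have h5 : f' w = f w := hf'ne w (by push_neg; exact ⟨h1, h3⟩)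
        rw [h5]
        congr 1
        ext z
        simp only [Finset.mem_filter, mem_univ, true_and]
        exact hpoint (f w) h4 h2 h1 z
      have hPhif : Phi f = s * s + r * r
          + ∑ w ∈ univ \ (A ∪ Q), (univ.filter fun z => f z = f w).card := by
        simp only [hPhi]
        rw [hsplit (fun w => (univ.filter fun z => f z = f w).card)]
        congr 2
        · rw [Finset.sum_congr rfl tA, Finset.sum_const, smul_eq_mul, ← hs]
        · rw [Finset.sum_congr rfl tQ, Finset.sum_const, smul_eq_mul, ← hr]
      have hPhif' : Phi f' = (s + 1) * (s + 1) + r1 * r1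
          + ∑ w ∈ univ \ (A ∪ Q), (univ.filter fun z => f z = f w).card := by
        simp only [hPhi]
        rw [hsplit' (fun w => (univ.filter fun z => f' z = f' w).card)]
        congr 1
        · congr 1
          · rw [Finset.sum_congr rfl tA', Finset.sum_const, smul_eq_mul,
              Finset.card_insert_of_notMem hvA', ← hs]
          · rw [Finset.sum_congr rfl tQ', Finset.sum_const, smul_eq_mul, ← hr1e]
        · exact Finset.sum_congr rfl trest
      have hPhieq : Phi f' + 2 * r = Phi f + 2 * s + 2 := by
        rw [hPhif, hPhif']
        have e1 : (s + 1) * (s + 1) = s * s + 2 * s + 1 := by ring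
        have e2 : r * r = r1 * r1 + 2 * r1 + 1 := by rw [← hr1]; ring
        rw [e1, e2]
        have := hr1
        generalize s * s = X
        generalize r1 * r1 = Y
        omega
      -- Eng values
      set d : ℕ := ((Q.erase v).filter fun z => Gᶜ.Adj v z).card with hd
      have hdbound : d + 2 ≤ r := by
        have hsubd : ((Q.erase v).filter fun z => Gᶜ.Adj v z) ⊆ (Q.erase v).erase w0 := by
          intro z hz
          obtain ⟨hz1, hz2⟩ := Finset.mem_filter.mp hz
          refine Finset.mem_erase.mpr ⟨?_, hz1⟩
          rintro rfl
          exact ((SimpleGraph.compl_adj G v z).mp hz2).2 hw0adj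
        have h1 : d ≤ ((Q.erase v).erase w0).card := Finset.card_le_card hsubd
        have h2 : ((Q.erase v).erase w0).card + 1 = (Q.erase v).card :=
          Finset.card_erase_add_one (Finset.mem_erase.mpr ⟨hw0v, hw0Q⟩)
        have h3 : (Q.erase v).card + 1 = r := Finset.card_erase_add_one hvQ
        omega
      have eA : ∀ w ∈ A, (univ.filter fun z => f' z = f' w ∧ Gᶜ.Adj w z).card
          = (univ.filter fun z => f z = f w ∧ Gᶜ.Adj w z).card + 1 := by
        intro w hw
        have hfw : f w = xm := by simpa [hA] using hw
        have hf'w : f' w = v := hf'eq w (Or.inl hfw)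
        have hL : (univ.filter fun z => f' z = f' w ∧ Gᶜ.Adj w z)
            = insert v (univ.filter fun z => f z = f w ∧ Gᶜ.Adj w z) := by
          ext z
          simp only [Finset.mem_filter, mem_univ, true_and, Finset.mem_insert, hf'w]
          constructor
          · rintro ⟨hz1, hz2⟩
            have hzm : z ∈ insert v A := by
              rw [← F1]; exact Finset.mem_filter.mpr ⟨mem_univ z, hz1⟩
            rcases Finset.mem_insert.mp hzm with rfl | hzA
            · exact Or.inl rfl
            · have : f z = xm := by simpa [hA] using hzA
              exact Or.inr ⟨by rw [this, hfw], hz2⟩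
          · rintro (rfl | ⟨hz1, hz2⟩)
            · exact ⟨hf'eq z (Or.inr rfl), (hwit w hw).symm⟩
            · exact ⟨hf'eq z (Or.inl (by rw [hz1, hfw])), hz2⟩
        rw [hL]
        apply Finset.card_insert_of_notMem
        intro hvmem
        have hv1 : f v = f w := (Finset.mem_filter.mp hvmem).2.1
        rw [hfw] at hv1
        exact hjxm (hj.trans hv1)
      have ev' : (univ.filter fun z => f' z = f' v ∧ Gᶜ.Adj v z).card = s := by
        have hf'v : f' v = v := hf'eq v (Or.inr rfl)
        have hL : (univ.filter fun z => f' z = f' v ∧ Gᶜ.Adj v z)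
            = A.filter fun z => Gᶜ.Adj v z := by
          ext z
          simp only [Finset.mem_filter, mem_univ, true_and, hf'v]
          constructor
          · rintro ⟨hz1, hz2⟩
            have hzm : z ∈ insert v A := by
              rw [← F1]; exact Finset.mem_filter.mpr ⟨mem_univ z, hz1⟩
            rcases Finset.mem_insert.mp hzm with rfl | hzA
            · exact absurd hz2 (SimpleGraph.irrefl Gᶜ)
            · exact ⟨hzA, hz2⟩
          · rintro ⟨hzA, hz2⟩
            refine ⟨hf'eq z (Or.inl (by simpa [hA] using hzA)), hz2⟩
        rw [hL, Finset.filter_true_of_mem (fun z hz => hwit z hz), ← hs]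
      have ev : (univ.filter fun z => f z = f v ∧ Gᶜ.Adj v z).card = d := by
        have hL : (univ.filter fun z => f z = f v ∧ Gᶜ.Adj v z)
            = (Q.erase v).filter fun z => Gᶜ.Adj v z := by
          ext z
          simp only [Finset.mem_filter, mem_univ, true_and, Finset.mem_erase]
          constructor
          · rintro ⟨hz1, hz2⟩
            refine ⟨⟨?_, by simp [hQ, ← hj, hz1]⟩, hz2⟩
            rintro rfl
            exact absurd hz2 (SimpleGraph.irrefl Gᶜ)
          · rintro ⟨⟨hzv, hzQ⟩, hz2⟩
            have : f z = j := by simpa [hQ] using hzQ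
            exact ⟨by rw [this, hj], hz2⟩
        rw [hL, ← hd]
      have eQ : ∀ w ∈ Q.erase v, (univ.filter fun z => f' z = f' w ∧ Gᶜ.Adj w z).card
          + (if Gᶜ.Adj w v then 1 else 0)
          = (univ.filter fun z => f z = f w ∧ Gᶜ.Adj w z).card := by
        intro w hw
        obtain ⟨hwv, hwQ⟩ := Finset.mem_erase.mp hw
        have hfw : f w = j := by simpa [hQ] using hwQ
        have hf'w : f' w = j := by
          rw [hf'ne w (by push_neg; exact ⟨by rw [hfw]; exact hjxm, hwv⟩)]
          exact hfw
        have hL : (univ.filter fun z => f' z = f' w ∧ Gᶜ.Adj w z)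
            = (univ.filter fun z => f z = f w ∧ Gᶜ.Adj w z).erase v := by
          ext z
          simp only [Finset.mem_filter, mem_univ, true_and, hf'w, Finset.mem_erase]
          constructor
          · rintro ⟨hz1, hz2⟩
            have hzQe : z ∈ Q.erase v := by
              rw [← F2]; exact Finset.mem_filter.mpr ⟨mem_univ z, hz1⟩
            obtain ⟨hzv, hzQ2⟩ := Finset.mem_erase.mp hzQe
            have hfz : f z = j := by simpa [hQ] using hzQ2
            exact ⟨hzv, by rw [hfz, hfw], hz2⟩
          · rintro ⟨hzv, hz1, hz2⟩
            have hfz : f z = j := by rw [hz1, hfw]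
            refine ⟨?_, hz2⟩
            rw [hf'ne z (by push_neg; exact ⟨by rw [hfz]; exact hjxm, hzv⟩)]
            exact hfz
        rw [hL]
        by_cases hadj : Gᶜ.Adj w v
        · rw [if_pos hadj]
          exact Finset.card_erase_add_one (Finset.mem_filter.mpr
            ⟨mem_univ v, hj.symm.trans hfw.symm, hadj⟩)
        · rw [if_neg hadj]
          rw [Finset.erase_eq_of_notMem (fun h => hadj (Finset.mem_filter.mp h).2.2)]
          omega
      have erest : ∀ w ∈ univ \ (A ∪ Q),
          (univ.filter fun z => f' z = f' w ∧ Gᶜ.Adj w z).card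
          = (univ.filter fun z => f z = f w ∧ Gᶜ.Adj w z).card := by
        intro w hw
        simp only [Finset.mem_sdiff, Finset.mem_union, mem_univ, true_and] at hw
        have hwA : w ∉ A := fun h => hw (Or.inl h)
        have hwQ : w ∉ Q := fun h => hw (Or.inr h)
        have h1 : f w ≠ xm := by intro h; exact hwA (by simp [hA, h])
        have h2 : f w ≠ j := by intro h; exact hwQ (by simp [hQ, h])
        have h3 : w ≠ v := by rintro rfl; exact hwQ hvQ
        have h4 : f w ≠ v := fun h => h1 (Hc w h)
        have h5 : f' w = f w := hf'ne w (by push_neg; exact ⟨h1, h3⟩)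
        rw [h5]
        congr 1
        ext z
        simp only [Finset.mem_filter, mem_univ, true_and]
        exact and_congr_left (fun _ => hpoint (f w) h4 h2 h1 z)
      have hD2 : ∑ w ∈ Q.erase v, (if Gᶜ.Adj w v then 1 else 0) = d := by
        rw [← Finset.card_filter]
        rw [hd]
        congr 1
        apply Finset.filter_congr
        intro z _
        constructor
        · exact fun h => h.symm
        · exact fun h => h.symm
      have hsum1 : ∑ w ∈ insert v A, (univ.filter fun z => f' z = f' w ∧ Gᶜ.Adj w z).card
          = (∑ w ∈ A, (univ.filter fun z => f z = f w ∧ Gᶜ.Adj w z).card) + s + s := by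
        rw [Finset.sum_insert hvA', ev', Finset.sum_congr rfl eA,
          Finset.sum_add_distrib, Finset.sum_const, smul_eq_mul, mul_one, ← hs]
        ring
      have hsum2 : (∑ w ∈ Q.erase v, (univ.filter fun z => f' z = f' w ∧ Gᶜ.Adj w z).card) + d
          = ∑ w ∈ Q.erase v, (univ.filter fun z => f z = f w ∧ Gᶜ.Adj w z).card := by
        rw [← hD2, ← Finset.sum_add_distrib]
        exact Finset.sum_congr rfl eQ
      have hsum3 : ∑ w ∈ univ \ (A ∪ Q), (univ.filter fun z => f' z = f' w ∧ Gᶜ.Adj w z).card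
          = ∑ w ∈ univ \ (A ∪ Q), (univ.filter fun z => f z = f w ∧ Gᶜ.Adj w z).card :=
        Finset.sum_congr rfl erest
      have hEngeq : Eng f' + 2 * d = Eng f + 2 * s := by
        simp only [hEng]
        rw [hsplit (fun w => (univ.filter fun z => f z = f w ∧ Gᶜ.Adj w z).card),
          hsplit' (fun w => (univ.filter fun z => f' z = f' w ∧ Gᶜ.Adj w z).card)]
        rw [← Finset.sum_erase_add Q (fun w => (univ.filter fun z => f z = f w ∧ Gᶜ.Adj w z).card) hvQ,
          ev, hsum1, hsum3]
        omega
      -- the contradiction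
      have hOmlt : Om f' < Om f := by
        simp only [hOm]
        have h1 := hEle f
        have h2 := hEle f'
        rw [hC] at *
        generalize n * n = N at h1 h2 ⊢
        omega
      have hf'valid : Valid f' := by
        refine ⟨hf'cov, ?_⟩
        have hcardpos : 0 < img.card := Finset.card_pos.mpr himgne
        calc (Finset.univ.image f').card ≤ (insert v (img.erase xm)).card :=
              Finset.card_le_card hf'sub
          _ ≤ (img.erase xm).card + 1 := Finset.card_insert_le _ _
          _ = img.card - 1 + 1 := by rw [Finset.card_erase_of_mem hxm]
          _ ≤ b := by omega
      exact absurd (hfmin f' (Finset.mem_filter.mpr ⟨Finset.mem_univ _, hf'valid⟩))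
        (not_le.mpr hOmlt)
  refine ⟨A, hAdom, ?_⟩
  rw [← hs]
  exact hsb

end JPAux

theorem powerDomNum_le_card_div_powerDomNum_compl {V : Type*} [Fintype V] [Nonempty V]
    (G : SimpleGraph V) :
    G.powerDomNum ≤ Fintype.card V / Gᶜ.powerDomNum := by
  obtain ⟨D, hDdom, hDle⟩ := jaeger_payan G
  have h1 : G.powerDomNum ≤ D.card := powerDomNum_le_of_dominating G D hDdom
  have h2 : Gᶜ.powerDomNum ≤ Gᶜ.domNum := by
    obtain ⟨B, hBcard, hBdom⟩ := exists_domNum_set Gᶜ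
    calc Gᶜ.powerDomNum ≤ B.card := powerDomNum_le_of_dominating Gᶜ B hBdom
      _ = Gᶜ.domNum := hBcard
  have h3 : 0 < Gᶜ.powerDomNum := powerDomNum_pos Gᶜ
  rw [Nat.le_div_iff_mul_le h3]
  calc G.powerDomNum * Gᶜ.powerDomNum ≤ D.card * Gᶜ.domNum := Nat.mul_le_mul h1 h2
    _ ≤ Fintype.card V := hDle
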